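/- The permute-and-flip distribution with scores q and rate λ is equal, as a probability distribution on Fin k, to the Algorithm-A distribution with the same scores q and rate λ. -/

import Mathlib

open MeasureTheory ProbabilityTheory Real
open scoped ENNReal

/-- The Bernoulli distribution on `Bool` with success probability `p`
(a probability measure whenever `0 ≤ p ≤ 1`). -/
noncomputable def bernoulliMeasure (p : ℝ) : Measure Bool :=
  ENNReal.ofReal p • Measure.dirac true + ENNReal.ofReal (1 - p) • Measure.dirac false

/-- Every function on the permutation group of `Fin k` is measurable (discrete σ-algebra). -/
instance (n : ℕ) : MeasurableSpace (Equiv.Perm (Fin n)) := ⊤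

/-- The joint law of a uniformly random permutation of `Fin k` together with (independent of it)
independent Bernoulli coins, the `i`-th having success probability `p i`. -/
noncomputable def permCoinsMeasure (k : ℕ) (p : Fin k → ℝ) :
    Measure (Equiv.Perm (Fin k) × (Fin k → Bool)) :=
  ((PMF.uniformOfFintype (Equiv.Perm (Fin k))).toMeasure).prod
    (Measure.pi fun i => bernoulliMeasure (p i))

section Aux

instance (p : ℝ) : IsFiniteMeasure (bernoulliMeasure p) := by
  constructor
  simp only [_root_.bernoulliMeasure, Measure.coe_add, Measure.coe_smul, Pi.add_apply, Pi.smul_apply,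
    smul_eq_mul, measure_univ, mul_one]
  exact ENNReal.add_lt_top.2 ⟨ENNReal.ofReal_lt_top, ENNReal.ofReal_lt_top⟩

lemma bernoulliMeasure_true (p : ℝ) : bernoulliMeasure p {true} = ENNReal.ofReal p := by
  simp [_root_.bernoulliMeasure, Measure.dirac_apply]

lemma bernoulliMeasure_false (p : ℝ) : bernoulliMeasure p {false} = ENNReal.ofReal (1 - p) := by
  simp [_root_.bernoulliMeasure, Measure.dirac_apply]

instance (n : ℕ) : MeasurableSingletonClass (Equiv.Perm (Fin n)) := ⟨fun _ => trivial⟩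

lemma measure_eq_sum_indicator {α} [Fintype α] [MeasurableSpace α] [MeasurableSingletonClass α]
    (μ : Measure α) (s : Set α) [DecidablePred (· ∈ s)] :
    μ s = ∑ x : α, if x ∈ s then μ {x} else 0 := by
  have hs : MeasurableSet s := s.to_countable.measurableSet
  rw [← lintegral_indicator_one hs, lintegral_fintype]
  apply Finset.sum_congr rfl
  intro x _
  by_cases hx : x ∈ s <;> simp [Set.indicator, hx]

lemma permCoinsMeasure_singleton (k : ℕ) (p : Fin k → ℝ) (pp : Equiv.Perm (Fin k))
    (b : Fin k → Bool) :
    permCoinsMeasure k p {(pp, b)} =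
      ((Nat.factorial k : ℝ≥0∞))⁻¹ *
        ∏ j, (if b j then ENNReal.ofReal (p j) else ENNReal.ofReal (1 - p j)) := by
  rw [permCoinsMeasure, ← Set.singleton_prod_singleton, Measure.prod_prod,
    ← Set.univ_pi_singleton b, Measure.pi_pi]
  congr 1
  · rw [PMF.toMeasure_apply_singleton _ _ (measurableSet_singleton _), PMF.uniformOfFintype_apply]
    simp [Fintype.card_perm]
  · exact Finset.prod_congr rfl fun j _ => by cases hbj : b j <;>
      simp [bernoulliMeasure_true, bernoulliMeasure_false, hbj]

lemma expMeasure_Iic' {r : ℝ} (hr : 0 < r) (x : ℝ) :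
    expMeasure r (Set.Iic x) = ENNReal.ofReal (if 0 ≤ x then 1 - exp (-(r * x)) else 0) := by
  rw [expMeasure, gammaMeasure, withDensity_apply _ measurableSet_Iic]
  exact lintegral_exponentialPDF_eq_antiDeriv hr x

lemma expMeasure_singleton' {r : ℝ} (x : ℝ) : expMeasure r {x} = 0 :=
  (withDensity_absolutelyContinuous _ _) (measure_singleton x)

lemma expMeasure_Iio' {r : ℝ} (hr : 0 < r) (x : ℝ) :
    expMeasure r (Set.Iio x) = ENNReal.ofReal (if 0 ≤ x then 1 - exp (-(r * x)) else 0) := by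
  rw [← expMeasure_Iic' hr, ← Set.Iio_union_right,
    measure_union (by simp) (measurableSet_singleton x), expMeasure_singleton', add_zero]

lemma expMeasure_Ici' {r : ℝ} (hr : 0 < r) {x : ℝ} (hx : 0 ≤ x) :
    expMeasure r (Set.Ici x) = ENNReal.ofReal (exp (-(r * x))) := by
  haveI := isProbabilityMeasure_expMeasure hr
  have h1 : exp (-(r * x)) ≤ 1 := exp_le_one_iff.2 (by nlinarith)
  rw [← Set.compl_Iio, measure_compl measurableSet_Iio (measure_ne_top _ _),
    expMeasure_Iio' hr, if_pos hx, measure_univ]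
  rw [← ENNReal.ofReal_one,
    ← ENNReal.ofReal_sub _ (by linarith [exp_pos (-(r*x))] : (0:ℝ) ≤ 1 - rexp (-(r*x)))]
  norm_num

lemma pnf_count {k : ℕ} (i : Fin k) (b : Fin k → Bool) (hbi : b i = true) :
    (Finset.univ.filter fun j : Fin k => b j = true).card *
      (Finset.univ.filter fun pp : Equiv.Perm (Fin k) =>
        ∀ j, pp.symm j < pp.symm i → b j = false).card = Nat.factorial k := by
  classical
  set T : Finset (Fin k) := Finset.univ.filter fun j => b j = true with hT
  have hiT : i ∈ T := by simp [hT, hbi]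
  have hTne : ∀ pp : Equiv.Perm (Fin k), (T.image fun j => pp.symm j).Nonempty :=
    fun pp => ⟨pp.symm i, Finset.mem_image_of_mem _ hiT⟩
  set g : Equiv.Perm (Fin k) → Fin k :=
    fun pp => pp ((T.image fun j => pp.symm j).min' (hTne pp)) with hg
  set G : Fin k → Finset (Equiv.Perm (Fin k)) := fun j =>
    Finset.univ.filter fun pp => ∀ l, pp.symm l < pp.symm j → b l = false with hGdef
  have hmemT : ∀ l, l ∈ T ↔ b l = true := by intro l; simp [hT]
  have hmem : ∀ j ∈ T, ∀ pp : Equiv.Perm (Fin k),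
      pp ∈ G j ↔ ∀ l ∈ T, pp.symm j ≤ pp.symm l := by
    intro j hj pp
    simp only [hGdef, Finset.mem_filter, Finset.mem_univ, true_and]
    constructor
    · intro h l hl
      by_contra hlt
      have hf := h l (lt_of_not_ge hlt)
      rw [hmemT l] at hl
      simp [hf] at hl
    · intro h l hlt
      by_contra hbl
      have hl : l ∈ T := (hmemT l).2 (by simpa using hbl)
      exact absurd (h l hl) (not_le.2 hlt)
  have hkey : ∀ j ∈ T, ∀ pp : Equiv.Perm (Fin k), g pp = j ↔ pp ∈ G j := by
    intro j hj pp
    rw [hmem j hj pp]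
    constructor
    · intro hgj l hl
      have hj' : pp.symm j = (T.image fun m => pp.symm m).min' (hTne pp) := by
        conv_lhs => rw [← hgj]
        simp [hg]
      rw [hj']
      exact Finset.min'_le _ _ (Finset.mem_image_of_mem _ hl)
    · intro h
      have hmin : (T.image fun m => pp.symm m).min' (hTne pp) = pp.symm j := by
        apply le_antisymm
        · exact Finset.min'_le _ _ (Finset.mem_image_of_mem _ hj)
        · apply Finset.le_min'
          intro y hy
          obtain ⟨l, hl, rfl⟩ := Finset.mem_image.mp hy
          exact h l hl
      simp [hg, hmin]
  have hfib : ∑ j ∈ T, (G j).card = Nat.factorial k := by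
    have h1 : ∀ pp : Equiv.Perm (Fin k), pp ∈ Finset.univ → g pp ∈ T := by
      intro pp _
      obtain ⟨l, hl, hmin⟩ := Finset.mem_image.mp (Finset.min'_mem _ (hTne pp))
      rw [hg]
      simp only
      rw [← hmin]
      simpa using hl
    have h2 := (Finset.card_eq_sum_card_fiberwise h1).symm
    have h3 : ∀ j ∈ T, (Finset.univ.filter fun pp => g pp = j) = G j := by
      intro j hj
      ext pp
      simp [hkey j hj pp]
    calc ∑ j ∈ T, (G j).card
        = ∑ j ∈ T, (Finset.filter (fun a => g a = j) Finset.univ).card :=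
          Finset.sum_congr rfl (fun j hj => by rw [h3 j hj])
      _ = Finset.univ.card := h2
      _ = Nat.factorial k := by simp [Fintype.card_perm]
  have step : ∀ a ∈ T, ∀ c ∈ T, ∀ pp ∈ G a, pp.trans (Equiv.swap a c) ∈ G c := by
    intro a ha c hc pp hpp
    rw [hGdef, Finset.mem_filter] at hpp ⊢
    refine ⟨Finset.mem_univ _, ?_⟩
    intro l hl
    rw [Equiv.symm_trans_apply, Equiv.symm_swap, Equiv.symm_trans_apply, Equiv.symm_swap,
      Equiv.swap_apply_right] at hl
    rcases eq_or_ne l a with rfl | hla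
    · rw [Equiv.swap_apply_left] at hl
      have := hpp.2 c hl
      rw [hmemT c] at hc
      simp [this] at hc
    · rcases eq_or_ne l c with rfl | hlc
      · rw [Equiv.swap_apply_right] at hl
        exact absurd hl (lt_irrefl _)
      · rw [Equiv.swap_apply_of_ne_of_ne hla hlc] at hl
        exact hpp.2 l hl
  have hcard : ∀ j ∈ T, (G j).card = (G i).card := by
    intro j hj
    apply Finset.card_nbij' (fun pp => pp.trans (Equiv.swap j i))
      (fun pp => pp.trans (Equiv.swap i j))
    · intro pp hpp
      exact step j hj i hiT pp hpp
    · intro pp hpp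
      exact step i hiT j hj pp hpp
    · intro pp _
      dsimp only
      rw [Equiv.trans_assoc, Equiv.swap_comm, Equiv.swap_swap, Equiv.trans_refl]
    · intro pp _
      dsimp only
      rw [Equiv.trans_assoc, Equiv.swap_comm, Equiv.swap_swap, Equiv.trans_refl]
  calc T.card * (G i).card = ∑ _j ∈ T, (G i).card := by rw [Finset.sum_const, smul_eq_mul]
    _ = ∑ j ∈ T, (G j).card := (Finset.sum_congr rfl hcard).symm
    _ = Nat.factorial k := hfib

lemma nat_inv_helper {a g f : ℕ} (h : a * g = f) (hf : f ≠ 0) :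
    (g : ℝ≥0∞) * (f : ℝ≥0∞)⁻¹ = (a : ℝ≥0∞)⁻¹ := by
  have ha : a ≠ 0 := by rintro rfl; simp at h; omega
  have hg : g ≠ 0 := by rintro rfl; simp at h; omega
  subst h
  push_cast
  rw [ENNReal.mul_inv (Or.inl (by exact_mod_cast Nat.cast_ne_zero.2 ha)) (Or.inl (ENNReal.natCast_ne_top a)),
    mul_comm ((a : ℝ≥0∞))⁻¹ _, ← mul_assoc,
    ENNReal.mul_inv_cancel (by exact_mod_cast Nat.cast_ne_zero.2 hg) (ENNReal.natCast_ne_top g),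
    one_mul]

end Aux

/-- **Permute-and-flip = Algorithm A.**
For every outcome `i : Fin k`, the probability that permute-and-flip (with scores `q`, rate `lam`)
outputs `i` (i.e. that the coin of `i` lands heads and all coins of indices preceding `i` in the
random order land tails) equals the probability that Algorithm A outputs `i`, namely the expected
value, over i.i.d. `X j ~ Expo(lam)`, of the probability `1/|S|·1[i ∈ S]` that a uniformly random
element of `S = {j | q j + X j ≥ q*}` equals `i`. -/
theorem permuteAndFlip_eq_algorithmA
    (k : ℕ) (q : Fin k → ℝ) (lam : ℝ) (hlam : 0 < lam)
    (qstar : ℝ) (hqstar : IsGreatest (Set.range q) qstar) :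
    ∀ i : Fin k,
      permCoinsMeasure k (fun j => exp (lam * (q j - qstar)))
        {w | w.2 i = true ∧ ∀ j : Fin k, w.1.symm j < w.1.symm i → w.2 j = false}
      = ∫⁻ x, (if qstar ≤ q i + x i then
            (((Finset.univ.filter (fun j : Fin k => qstar ≤ q j + x j)).card : ℝ≥0∞))⁻¹ else 0)
          ∂(Measure.pi fun _ : Fin k => expMeasure lam) := by
  classical
  intro i
  haveI := isProbabilityMeasure_expMeasure hlam
  have hq : ∀ j, q j ≤ qstar := fun j => hqstar.2 ⟨j, rfl⟩
  set p : Fin k → ℝ := fun j => exp (lam * (q j - qstar)) with hp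
  set w : (Fin k → Bool) → ℝ≥0∞ :=
    fun b => ∏ j, (if b j then ENNReal.ofReal (p j) else ENNReal.ofReal (1 - p j)) with hw
  set c : (Fin k → Bool) → ℝ≥0∞ :=
    fun b => if b i = true then
      ((Finset.univ.filter fun j => b j = true).card : ℝ≥0∞)⁻¹ else 0 with hc
  have hfac0 : (Nat.factorial k : ℝ≥0∞) ≠ 0 := by
    exact_mod_cast Nat.cast_ne_zero.2 (Nat.factorial_ne_zero k)
  -- LHS
  have hL : permCoinsMeasure k p
      {w | w.2 i = true ∧ ∀ j : Fin k, w.1.symm j < w.1.symm i → w.2 j = false}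
      = ∑ b : Fin k → Bool, c b * w b := by
    rw [measure_eq_sum_indicator, Fintype.sum_prod_type, Finset.sum_comm]
    apply Finset.sum_congr rfl
    intro b _
    by_cases hbi : b i = true
    · have hterm : ∀ pp : Equiv.Perm (Fin k),
          (if (pp, b) ∈ {w : Equiv.Perm (Fin k) × (Fin k → Bool) |
              w.2 i = true ∧ ∀ j : Fin k, w.1.symm j < w.1.symm i → w.2 j = false}
            then permCoinsMeasure k p {(pp, b)} else 0)
          = (if (∀ j, pp.symm j < pp.symm i → b j = false)
              then (Nat.factorial k : ℝ≥0∞)⁻¹ * w b else 0) := by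
        intro pp
        rw [permCoinsMeasure_singleton]
        simp only [Set.mem_setOf_eq, hbi, true_and]
        rfl
      rw [Finset.sum_congr rfl fun pp _ => hterm pp, ← Finset.sum_filter,
        Finset.sum_const, nsmul_eq_mul, hc]
      simp only [hbi, if_true]
      rw [← mul_assoc]
      congr 1
      exact nat_inv_helper (pnf_count i b hbi) (Nat.factorial_ne_zero k)
    · have hterm : ∀ pp : Equiv.Perm (Fin k),
          (if (pp, b) ∈ {w : Equiv.Perm (Fin k) × (Fin k → Bool) |
              w.2 i = true ∧ ∀ j : Fin k, w.1.symm j < w.1.symm i → w.2 j = false}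
            then permCoinsMeasure k p {(pp, b)} else 0) = 0 := by
        intro pp
        simp [Set.mem_setOf_eq, hbi]
      rw [Finset.sum_congr rfl fun pp _ => hterm pp]
      simp [hc, hbi]
  -- RHS
  set F : (Fin k → ℝ) → (Fin k → Bool) := fun x j => decide (qstar - q j ≤ x j) with hF
  have hFmeas : Measurable F := by
    apply measurable_pi_lambda
    intro j
    have heq : (fun x : Fin k → ℝ => decide (qstar - q j ≤ x j))
        = (fun t : ℝ => decide (qstar - q j ≤ t)) ∘ (fun x => x j) := rfl
    rw [heq]
    apply Measurable.comp _ (measurable_pi_apply j)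
    apply measurable_to_countable'
    intro t
    cases t
    · have : (fun t : ℝ => decide (qstar - q j ≤ t)) ⁻¹' {false} = Set.Iio (qstar - q j) := by
        ext s
        simp only [Set.mem_preimage, Set.mem_singleton_iff, decide_eq_false_iff_not, not_le,
          Set.mem_Iio]
      rw [this]; exact measurableSet_Iio
    · have : (fun t : ℝ => decide (qstar - q j ≤ t)) ⁻¹' {true} = Set.Ici (qstar - q j) := by
        ext s; simp
      rw [this]; exact measurableSet_Ici
  have hiff : ∀ (x : Fin k → ℝ) (j : Fin k), (qstar ≤ q j + x j) ↔ (F x j = true) := by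
    intro x j
    rw [hF]
    simp only [decide_eq_true_eq]
    constructor <;> intro <;> linarith
  have hR : ∫⁻ x, (if qstar ≤ q i + x i then
        (((Finset.univ.filter (fun j : Fin k => qstar ≤ q j + x j)).card : ℝ≥0∞))⁻¹ else 0)
        ∂(Measure.pi fun _ : Fin k => expMeasure lam)
      = ∑ b : Fin k → Bool, c b * w b := by
    have hint : ∀ x : Fin k → ℝ, (if qstar ≤ q i + x i then
        (((Finset.univ.filter (fun j : Fin k => qstar ≤ q j + x j)).card : ℝ≥0∞))⁻¹ else 0)
        = c (F x) := by
      intro x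
      rw [hc]
      simp only
      by_cases h : qstar ≤ q i + x i
      · rw [if_pos h, if_pos ((hiff x i).1 h)]
        congr 2
        exact congrArg Finset.card (Finset.filter_congr fun j _ => hiff x j)
      · rw [if_neg h, if_neg (fun hh => h ((hiff x i).2 hh))]
    calc ∫⁻ x, (if qstar ≤ q i + x i then
          (((Finset.univ.filter (fun j : Fin k => qstar ≤ q j + x j)).card : ℝ≥0∞))⁻¹ else 0)
          ∂(Measure.pi fun _ : Fin k => expMeasure lam)
        = ∫⁻ x, c (F x) ∂(Measure.pi fun _ : Fin k => expMeasure lam) :=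
          lintegral_congr hint
      _ = ∫⁻ b, c b ∂((Measure.pi fun _ : Fin k => expMeasure lam).map F) :=
          (lintegral_map (measurable_of_countable c) hFmeas).symm
      _ = ∑ b : Fin k → Bool, c b * ((Measure.pi fun _ : Fin k => expMeasure lam).map F) {b} :=
          lintegral_fintype _
      _ = ∑ b : Fin k → Bool, c b * w b := by
          apply Finset.sum_congr rfl
          intro b _
          congr 1
          rw [Measure.map_apply hFmeas (measurableSet_singleton b)]
          have hpre : F ⁻¹' {b} = Set.pi Set.univ
              (fun j => if b j = true then Set.Ici (qstar - q j) else Set.Iio (qstar - q j)) := by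
            ext x
            simp only [Set.mem_preimage, Set.mem_singleton_iff, funext_iff, Set.mem_pi,
              Set.mem_univ, true_implies]
            apply forall_congr'
            intro j
            cases hbj : b j
            · rw [hF]
              simp only [hbj, decide_eq_false_iff_not, not_le, Set.mem_Iio, if_neg,
                Bool.false_eq_true, if_false]
            · rw [hF]
              simp only [hbj, decide_eq_true_eq, if_true, Set.mem_Ici]
          rw [hpre, Measure.pi_pi, hw]
          apply Finset.prod_congr rfl
          intro j _
          have hqj : (0:ℝ) ≤ qstar - q j := sub_nonneg.2 (hq j)
          have hexp : p j = rexp (-(lam * (qstar - q j))) := by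
            rw [hp]; simp only; congr 1; ring
          cases hbj : b j
          · simp only [hbj, if_neg, Bool.false_eq_true, if_false]
            rw [expMeasure_Iio' hlam, if_pos hqj, hexp]
          · simp only [hbj, if_true]
            rw [expMeasure_Ici' hlam hqj, hexp]
  rw [hL, hR]
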